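/- Let a, φ : ℝ³ → ℝ³ be C² (respectively continuous suffices for φ together with C¹ regularity), 2π-periodic in each coordinate, and divergence-free (Σⱼ ∂ⱼaⱼ = 0 and Σⱼ ∂ⱼφⱼ = 0), and let q : ℝ³ → ℝ be C² and 2π-periodic in each coordinate. Set v := a + ∇q. Then ∫_Q [ (a·∇)v + (∇a)ᵀv ]·φ dx = ∫_Q [ (a·∇)a ]·φ dx, where Q = [0,2π]³. -/

import Mathlib

open Set Real MeasureTheory

/-- Spatial partial derivative `∂ᵢ f` of a scalar function on `ℝ³`. -/
noncomputable def pd (i : Fin 3) (f : (Fin 3 → ℝ) → ℝ) (x : Fin 3 → ℝ) : ℝ :=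
  fderiv ℝ f x (Pi.single i 1)

lemma pd_add {f g : (Fin 3 → ℝ) → ℝ} {x : Fin 3 → ℝ} (hf : DifferentiableAt ℝ f x)
    (hg : DifferentiableAt ℝ g x) (i : Fin 3) :
    pd i (fun y => f y + g y) x = pd i f x + pd i g x := by
  simp [pd, fderiv_fun_add hf hg]

lemma pd_mul {f g : (Fin 3 → ℝ) → ℝ} {x : Fin 3 → ℝ} (hf : DifferentiableAt ℝ f x)
    (hg : DifferentiableAt ℝ g x) (i : Fin 3) :
    pd i (fun y => f y * g y) x = pd i f x * g x + f x * pd i g x := by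
  simp [pd, fderiv_fun_mul hf hg]; ring

lemma pd_const_mul {f : (Fin 3 → ℝ) → ℝ} {x : Fin 3 → ℝ} (hf : DifferentiableAt ℝ f x)
    (c : ℝ) (i : Fin 3) :
    pd i (fun y => c * f y) x = c * pd i f x := by
  simp [pd, fderiv_const_mul hf c]

lemma pd_sum {ι : Type*} {s : Finset ι} {f : ι → (Fin 3 → ℝ) → ℝ} {x : Fin 3 → ℝ}
    (h : ∀ j ∈ s, DifferentiableAt ℝ (f j) x) (i : Fin 3) :
    pd i (fun y => ∑ j ∈ s, f j y) x = ∑ j ∈ s, pd i (f j) x := by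
  simp [pd, fderiv_fun_sum h]

lemma contDiff_pd {f : (Fin 3 → ℝ) → ℝ} (hf : ContDiff ℝ 2 f) (i : Fin 3) :
    ContDiff ℝ 1 (pd i f) :=
  (hf.fderiv_right (by norm_num)).clm_apply contDiff_const

lemma continuous_pd {f : (Fin 3 → ℝ) → ℝ} (hf : ContDiff ℝ 1 f) (i : Fin 3) :
    Continuous (pd i f) :=
  (hf.continuous_fderiv one_ne_zero).clm_apply continuous_const

lemma pd_comm {q : (Fin 3 → ℝ) → ℝ} (hq : ContDiff ℝ 2 q) (i j : Fin 3) (x : Fin 3 → ℝ) :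
    pd i (fun y => pd j q y) x = pd j (fun y => pd i q y) x := by
  have hdq : ContDiff ℝ 1 (fderiv ℝ q) := hq.fderiv_right (by norm_num)
  have hsymm : ∀ u w : Fin 3 → ℝ,
      fderiv ℝ (fderiv ℝ q) x u w = fderiv ℝ (fderiv ℝ q) x w u :=
    second_derivative_symmetric (fun y => (hq.differentiable two_ne_zero y).hasFDerivAt)
      ((hdq.differentiable one_ne_zero x).hasFDerivAt)
  have key : ∀ k l : Fin 3, pd k (fun y => pd l q y) x
      = fderiv ℝ (fderiv ℝ q) x (Pi.single k 1) (Pi.single l 1) := by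
    intro k l
    have : (fun y => pd l q y) = fun y => (fderiv ℝ q y) (Pi.single l 1) := rfl
    rw [pd, this, fderiv_clm_apply (hdq.differentiable one_ne_zero x) (differentiableAt_const _)]
    simp
  rw [key, key, hsymm]

lemma pd_period {f : (Fin 3 → ℝ) → ℝ} (hf : Differentiable ℝ f) {c : Fin 3 → ℝ}
    (hper : ∀ x, f (x + c) = f x) (i : Fin 3) (x : Fin 3 → ℝ) :
    pd i f (x + c) = pd i f x := by
  have h : HasFDerivAt (fun y => f (y + c)) (fderiv ℝ f (x + c)) x := by
    simpa [Function.comp_def] using (hf (x + c)).hasFDerivAt.comp x ((hasFDerivAt_id x).add_const c)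
  have hfun : (fun y => f (y + c)) = f := funext hper
  rw [hfun] at h
  rw [pd, pd, h.fderiv]

lemma insertNth_add_single (i : Fin 3) (x : Fin 2 → ℝ) :
    (Fin.insertNth i (0 : ℝ) x : Fin 3 → ℝ) + Pi.single i (2 * Real.pi)
      = Fin.insertNth i (2 * Real.pi) x := by
  ext j
  refine Fin.succAboveCases i ?_ ?_ j
  · simp
  · intro k
    simp [Pi.single_eq_of_ne (Fin.succAbove_ne i k)]

lemma integral_pd_div_eq_zero (F : (Fin 3 → ℝ) → Fin 3 → ℝ) (hF : ContDiff ℝ 1 F)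
    (hper : ∀ x, ∀ j : Fin 3, F (x + Pi.single j (2 * Real.pi)) = F x) :
    ∫ x in Set.univ.pi fun _ : Fin 3 => Set.Icc (0 : ℝ) (2 * Real.pi),
      ∑ i : Fin 3, fderiv ℝ (fun y => F y i) x (Pi.single i 1) = 0 := by
  have hset : (Set.univ.pi fun _ : Fin 3 => Set.Icc (0 : ℝ) (2 * Real.pi))
      = Set.Icc (0 : Fin 3 → ℝ) (fun _ => 2 * Real.pi) := Set.pi_univ_Icc _ _
  have hFd : Differentiable ℝ F := hF.differentiable one_ne_zero
  have hcomp : ∀ (x : Fin 3 → ℝ) (i : Fin 3),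
      fderiv ℝ (fun y => F y i) x (Pi.single i 1) = fderiv ℝ F x (Pi.single i 1) i := by
    intro x i
    have := ((ContinuousLinearMap.proj (R := ℝ) (φ := fun _ : Fin 3 => ℝ) i).hasFDerivAt.comp
      x (hFd x).hasFDerivAt).fderiv
    rw [show (fun y => F y i) = (ContinuousLinearMap.proj (R := ℝ)
      (φ := fun _ : Fin 3 => ℝ) i) ∘ F from rfl, this]
    rfl
  have hcont : Continuous fun x => ∑ i : Fin 3, fderiv ℝ F x (Pi.single i 1) i := by
    apply continuous_finset_sum
    intro i _
    exact (continuous_apply i).comp ((hF.continuous_fderiv one_ne_zero).clm_apply continuous_const)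
  have hle : (0 : Fin 3 → ℝ) ≤ fun _ => 2 * Real.pi := fun i => by positivity
  have key := integral_divergence_of_hasFDerivAt_off_countable
    (a := (0 : Fin 3 → ℝ)) (b := fun _ => 2 * Real.pi) hle F (fderiv ℝ F) ∅ countable_empty
    hF.continuous.continuousOn (fun x _ => (hFd x).hasFDerivAt)
    (hcont.continuousOn.integrableOn_compact isCompact_Icc)
  simp only [hcomp, hset]
  rw [key]
  apply Finset.sum_eq_zero
  intro i _
  have hz : ∀ x : Fin 2 → ℝ, F (Fin.insertNth i ((fun _ : Fin 3 => 2 * Real.pi) i) x) i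
      = F (Fin.insertNth i ((0 : Fin 3 → ℝ) i) x) i := by
    intro x
    have h2 := hper (Fin.insertNth i (0 : ℝ) x) i
    rw [insertNth_add_single] at h2
    show F (Fin.insertNth i (2 * Real.pi) x) i = F (Fin.insertNth i (0 : ℝ) x) i
    exact congrFun h2 i
  simp only [hz, sub_self]



/-- The key identity (2.10): for periodic divergence-free `a` and `φ`, a
periodic C² scalar `q`, and `v := a + ∇q`, the gradient part of the nonlinear
term is annihilated when tested against the divergence-free `φ`:
`∫_Q [(a·∇)v + (∇a)ᵀv]·φ = ∫_Q [(a·∇)a]·φ`. -/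
theorem gradient_part_annihilated
    (a φ : (Fin 3 → ℝ) → Fin 3 → ℝ) (q : (Fin 3 → ℝ) → ℝ)
    (v : (Fin 3 → ℝ) → Fin 3 → ℝ)
    -- regularity
    (ha : ContDiff ℝ 2 a) (hφ : ContDiff ℝ 1 φ) (hq : ContDiff ℝ 2 q)
    -- 2π-periodicity in each coordinate
    (ha_per : ∀ x, ∀ j : Fin 3, a (x + Pi.single j (2 * Real.pi)) = a x)
    (hφ_per : ∀ x, ∀ j : Fin 3, φ (x + Pi.single j (2 * Real.pi)) = φ x)
    (hq_per : ∀ x, ∀ j : Fin 3, q (x + Pi.single j (2 * Real.pi)) = q x)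
    -- divergence-free conditions
    (ha_div : ∀ x, ∑ j : Fin 3, pd j (fun y => a y j) x = 0)
    (hφ_div : ∀ x, ∑ j : Fin 3, pd j (fun y => φ y j) x = 0)
    -- definition `v := a + ∇q`
    (hv : ∀ x i, v x i = a x i + pd i q x) :
    (∫ x in Set.univ.pi fun _ : Fin 3 => Set.Icc (0 : ℝ) (2 * Real.pi),
        ∑ i : Fin 3,
          ((∑ j : Fin 3, a x j * pd j (fun y => v y i) x)
            + ∑ j : Fin 3, pd i (fun y => a y j) x * v x j) * φ x i)
      = ∫ x in Set.univ.pi fun _ : Fin 3 => Set.Icc (0 : ℝ) (2 * Real.pi),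
          ∑ i : Fin 3, (∑ j : Fin 3, a x j * pd j (fun y => a y i) x) * φ x i := by
  -- component regularity
  have haC : ∀ i, ContDiff ℝ 2 fun x => a x i := fun i => contDiff_pi.1 ha i
  have haC1 : ∀ i, ContDiff ℝ 1 fun x => a x i := fun i => (haC i).of_le one_le_two
  have hφC : ∀ i, ContDiff ℝ 1 fun x => φ x i := fun i => contDiff_pi.1 hφ i
  have hqp : ∀ j, ContDiff ℝ 1 (pd j q) := fun j => contDiff_pd hq j
  -- the auxiliary scalar G and vector field F = G • φ
  set G : (Fin 3 → ℝ) → ℝ :=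
    fun x => ∑ j : Fin 3, (2 * (a x j * pd j q x) + a x j * a x j) with hGdef
  have hGC : ContDiff ℝ 1 G := by
    apply ContDiff.sum
    intro j _
    exact (contDiff_const.mul ((haC1 j).mul (hqp j))).add ((haC1 j).mul (haC1 j))
  have hFC : ContDiff ℝ 1 (fun x (i : Fin 3) => G x * φ x i) :=
    contDiff_pi.2 fun i => hGC.mul (hφC i)
  -- periodicity of F
  have hFper : ∀ x, ∀ j : Fin 3,
      (fun (i : Fin 3) => G (x + Pi.single j (2 * Real.pi)) * φ (x + Pi.single j (2 * Real.pi)) i)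
        = fun i => G x * φ x i := by
    intro x j
    have hqper' : ∀ k, pd k q (x + Pi.single j (2 * Real.pi)) = pd k q x := fun k =>
      pd_period (hq.differentiable two_ne_zero) (fun y => hq_per y j) k x
    have haper' : ∀ k, a (x + Pi.single j (2 * Real.pi)) k = a x k := fun k =>
      congrFun (ha_per x j) k
    have hG : G (x + Pi.single j (2 * Real.pi)) = G x := by
      simp only [hGdef, hqper', haper']
    funext i
    rw [hG, hφ_per x j]
  have hzero : (∫ x in Set.univ.pi fun _ : Fin 3 => Set.Icc (0 : ℝ) (2 * Real.pi),
      ∑ i : Fin 3, pd i (fun y => G y * φ y i) x) = 0 :=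
    integral_pd_div_eq_zero (fun x i => G x * φ x i) hFC hFper
  -- pointwise divergence computation
  have hDiv : ∀ x, ∑ i : Fin 3, pd i (fun y => G y * φ y i) x
      = ∑ i : Fin 3, pd i G x * φ x i := by
    intro x
    have h1 : ∀ i : Fin 3, pd i (fun y => G y * φ y i) x
        = pd i G x * φ x i + G x * pd i (fun y => φ y i) x := fun i =>
      pd_mul (hGC.differentiable one_ne_zero x) ((hφC i).differentiable one_ne_zero x) i
    simp only [h1]
    rw [Finset.sum_add_distrib, ← Finset.mul_sum, hφ_div x, mul_zero, add_zero]
  -- expansion of ∂ᵢG, with Schwarz symmetry applied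
  have hpdG : ∀ (x : Fin 3 → ℝ) (i : Fin 3), pd i G x
      = ∑ j : Fin 3, (2 * (pd i (fun y => a y j) x * pd j q x
            + a x j * pd j (fun y => pd i q y) x)
          + (pd i (fun y => a y j) x * a x j + a x j * pd i (fun y => a y j) x)) := by
    intro x i
    have hd1 : ∀ j : Fin 3, DifferentiableAt ℝ
        (fun y => 2 * (a y j * pd j q y) + a y j * a y j) x := by
      intro j
      exact ((contDiff_const.mul ((haC1 j).mul (hqp j))).add
        ((haC1 j).mul (haC1 j))).differentiable one_ne_zero x
    rw [hGdef]
    rw [pd_sum (fun j _ => hd1 j) i]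
    refine Finset.sum_congr rfl fun j _ => ?_
    have haD : DifferentiableAt ℝ (fun y => a y j) x := (haC1 j).differentiable one_ne_zero x
    have hqD : DifferentiableAt ℝ (pd j q) x := (hqp j).differentiable one_ne_zero x
    rw [pd_add (f := fun y => 2 * (a y j * pd j q y)) (g := fun y => a y j * a y j)
        ((differentiableAt_const (2:ℝ)).mul (haD.mul hqD)) (haD.mul haD),
      pd_const_mul (f := fun y => a y j * pd j q y) (haD.mul hqD), pd_mul haD hqD, pd_mul haD haD,
      pd_comm hq i j x]
  -- the key pointwise identity
  have hkey : ∀ x : Fin 3 → ℝ,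
      (∑ i : Fin 3, ((∑ j : Fin 3, a x j * pd j (fun y => v y i) x)
          + ∑ j : Fin 3, pd i (fun y => a y j) x * v x j) * φ x i)
        = (∑ i : Fin 3, (∑ j : Fin 3, a x j * pd j (fun y => a y i) x) * φ x i)
          + (∑ i : Fin 3, pd i (fun y => G y * φ y i) x) / 2 := by
    intro x
    rw [hDiv x]
    have hvfun : ∀ i : Fin 3, (fun y => v y i) = fun y => a y i + pd i q y := fun i =>
      funext fun y => hv y i
    have hsplit : ∀ i j : Fin 3, pd j (fun y => a y i + pd i q y) x
        = pd j (fun y => a y i) x + pd j (fun y => pd i q y) x := fun i j =>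
      pd_add ((haC1 i).differentiable one_ne_zero x) ((hqp i).differentiable one_ne_zero x) j
    simp only [hvfun, hsplit, hv, hpdG, Fin.sum_univ_three]
    ring
  simp only [hkey]
  -- integrability, to split the integral
  have hset : (Set.univ.pi fun _ : Fin 3 => Set.Icc (0 : ℝ) (2 * Real.pi))
      = Set.Icc (0 : Fin 3 → ℝ) (fun _ => 2 * Real.pi) := Set.pi_univ_Icc _ _
  have hcpt : IsCompact (Set.univ.pi fun _ : Fin 3 => Set.Icc (0 : ℝ) (2 * Real.pi)) := by
    rw [hset]; exact isCompact_Icc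
  have hRc : Continuous fun x =>
      ∑ i : Fin 3, (∑ j : Fin 3, a x j * pd j (fun y => a y i) x) * φ x i := by
    apply continuous_finset_sum
    intro i _
    refine Continuous.mul (continuous_finset_sum _ fun j _ => ?_)
      ((continuous_apply i).comp hφ.continuous)
    exact ((continuous_apply j).comp ha.continuous).mul (continuous_pd (haC1 i) j)
  have hDc : Continuous fun x => (∑ i : Fin 3, pd i (fun y => G y * φ y i) x) / 2 := by
    apply Continuous.div_const
    exact continuous_finset_sum _ fun i _ => continuous_pd (hGC.mul (hφC i)) i
  rw [MeasureTheory.integral_add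
    (hRc.continuousOn.integrableOn_compact hcpt)
    (hDc.continuousOn.integrableOn_compact hcpt)]
  have : (∫ x in Set.univ.pi fun _ : Fin 3 => Set.Icc (0 : ℝ) (2 * Real.pi),
      (∑ i : Fin 3, pd i (fun y => G y * φ y i) x) / 2)
      = (∫ x in Set.univ.pi fun _ : Fin 3 => Set.Icc (0 : ℝ) (2 * Real.pi),
        ∑ i : Fin 3, pd i (fun y => G y * φ y i) x) / 2 := integral_div 2 _
  rw [this, hzero]
  simp
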